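/- Let X be a separable real Banach space for which there exists a bounded linear map P : X** → X of operator norm 1 with P(ι(f)) = f for all f ∈ X, where ι : X → X** is the canonical embedding into the bidual. Then for every n ≥ 1, γ ≥ 1, and every compact set K ⊂ X, the infimum defining δ*_{n,γ}(K)_X is attained: there exist a norm ‖·‖_Y on ℝⁿ and maps ã : K → ℝⁿ with ‖ã(f)−ã(g)‖_Y ≤ γ‖f−g‖_X for all f,g ∈ K, and M̃ : ℝⁿ → X with ‖M̃(x)−M̃(y)‖_X ≤ γ‖x−y‖_Y for all x,y ∈ ℝⁿ, such that sup_{f∈K} ‖f − M̃(ã(f))‖_X = δ*_{n,γ}(K)_X. The analogous attainment holds for δ̄_{n,γ}(K)_X, with ã : X → ℝⁿ γ-Lipschitz on all of X. -/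

import Mathlib

open Metric

def IsNorm {n : ℕ} (nrm : (Fin n → ℝ) → ℝ) : Prop :=
  (∀ x, 0 ≤ nrm x) ∧
  (∀ x, nrm x = 0 → x = 0) ∧
  (∀ (c : ℝ) (x), nrm (c • x) = |c| * nrm x) ∧
  (∀ x y, nrm (x + y) ≤ nrm x + nrm y)

noncomputable def stableWidth (X : Type*) [NormedAddCommGroup X]
    (K : Set X) (n : ℕ) (γ : ℝ) : ℝ :=
  sInf { d | ∃ (nrm : (Fin n → ℝ) → ℝ) (a : X → Fin n → ℝ) (M : (Fin n → ℝ) → X),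
    IsNorm nrm ∧
    (∀ f ∈ K, ∀ g ∈ K, nrm (a f - a g) ≤ γ * ‖f - g‖) ∧
    (∀ x y, ‖M x - M y‖ ≤ γ * nrm (x - y)) ∧
    d = ⨆ f : K, ‖(f : X) - M (a (f : X))‖ }

noncomputable def modStableWidth (X : Type*) [NormedAddCommGroup X]
    (K : Set X) (n : ℕ) (γ : ℝ) : ℝ :=
  sInf { d | ∃ (nrm : (Fin n → ℝ) → ℝ) (a : X → Fin n → ℝ) (M : (Fin n → ℝ) → X),
    IsNorm nrm ∧
    (∀ f g : X, nrm (a f - a g) ≤ γ * ‖f - g‖) ∧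
    (∀ x y, ‖M x - M y‖ ≤ γ * nrm (x - y)) ∧
    d = ⨆ f : K, ‖(f : X) - M (a (f : X))‖ }

noncomputable def entropyNumber (X : Type*) [NormedAddCommGroup X] (K : Set X) (n : ℕ) : ℝ :=
  sInf { ε : ℝ | 0 < ε ∧ ∃ T : Finset X, T.card ≤ 2 ^ n ∧ K ⊆ ⋃ c ∈ T, closedBall c ε }


open Filter Topology NormedSpace

section Stmt4Aux

variable {n : ℕ} {nrm : (Fin n → ℝ) → ℝ}


theorem IsNorm.zero (h : IsNorm nrm) : nrm 0 = 0 := by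
  have := h.2.2.1 0 0
  simpa using this

theorem IsNorm.sub_le' (h : IsNorm nrm) (x y : Fin n → ℝ) :
    nrm x ≤ nrm y + nrm (x - y) := by
  have := h.2.2.2 y (x - y)
  simpa using this

theorem IsNorm.nrm_neg (h : IsNorm nrm) (x : Fin n → ℝ) : nrm (-x) = nrm x := by
  have := h.2.2.1 (-1) x
  simpa using this

theorem IsNorm.abs_sub' (h : IsNorm nrm) (x y : Fin n → ℝ) :
    |nrm x - nrm y| ≤ nrm (x - y) := by
  rw [abs_sub_le_iff]
  constructor
  · linarith [h.sub_le' x y]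
  · have h1 := h.sub_le' y x
    have e : nrm (y - x) = nrm (x - y) := by rw [← neg_sub x y, h.nrm_neg]
    linarith

theorem IsNorm.sum_le (h : IsNorm nrm) {ι : Type*} (s : Finset ι) (f : ι → (Fin n → ℝ)) :
    nrm (∑ i ∈ s, f i) ≤ ∑ i ∈ s, nrm (f i) := by
  classical
  induction s using Finset.cons_induction with
  | empty => simp [IsNorm.zero h]
  | cons a s ha ih =>
    rw [Finset.sum_cons, Finset.sum_cons]
    exact le_trans (h.2.2.2 _ _) (by linarith)

theorem IsNorm.le_norm (h : IsNorm nrm) (x : Fin n → ℝ) :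
    nrm x ≤ (∑ i : Fin n, nrm (fun j => if i = j then 1 else 0)) * ‖x‖ := by
  have hx : x = ∑ i : Fin n, x i • (fun j => if i = j then (1:ℝ) else 0) := pi_eq_sum_univ x
  calc nrm x = nrm (∑ i : Fin n, x i • (fun j => if i = j then (1:ℝ) else 0)) := by rw [← hx]
    _ ≤ ∑ i : Fin n, nrm (x i • (fun j => if i = j then (1:ℝ) else 0)) := h.sum_le _ _
    _ = ∑ i : Fin n, |x i| * nrm (fun j => if i = j then (1:ℝ) else 0) := by
        simp only [h.2.2.1]
    _ ≤ ∑ i : Fin n, ‖x‖ * nrm (fun j => if i = j then (1:ℝ) else 0) := by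
        apply Finset.sum_le_sum
        intro i _
        exact mul_le_mul_of_nonneg_right (by simpa using norm_le_pi_norm x i) (h.1 _)
    _ = _ := by rw [← Finset.mul_sum, mul_comm]

theorem IsNorm.continuous (h : IsNorm nrm) : Continuous nrm := by
  set C := ∑ i : Fin n, nrm (fun j => if i = j then (1:ℝ) else 0) with hC
  have hC0 : 0 ≤ C := Finset.sum_nonneg fun i _ => h.1 _
  rw [Metric.continuous_iff]
  intro x ε hε
  rcases eq_or_lt_of_le hC0 with hc | hc
  · refine ⟨1, one_pos, fun y _ => ?_⟩
    have h1 : nrm y ≤ C * ‖y‖ := h.le_norm y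
    have h2 : nrm x ≤ C * ‖x‖ := h.le_norm x
    have h1' : nrm y = 0 := le_antisymm (by rw [← hc] at h1; simpa using h1) (h.1 y)
    have h2' : nrm x = 0 := le_antisymm (by rw [← hc] at h2; simpa using h2) (h.1 x)
    simpa [Real.dist_eq, h1', h2'] using hε
  · refine ⟨ε / C, by positivity, fun y hy => ?_⟩
    rw [Real.dist_eq]
    calc |nrm y - nrm x| ≤ nrm (y - x) := h.abs_sub' y x
      _ ≤ C * ‖y - x‖ := h.le_norm _
      _ < C * (ε / C) := by
          apply mul_lt_mul_of_pos_left _ hc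
          rwa [dist_eq_norm] at hy
      _ = ε := by field_simp

theorem IsNorm.pos (h : IsNorm nrm) {x : Fin n → ℝ} (hx : x ≠ 0) : 0 < nrm x :=
  lt_of_le_of_ne (h.1 x) fun e => hx (h.2.1 x e.symm)

theorem IsNorm.lower (hn : 0 < n) (h : IsNorm nrm) :
    ∃ c > 0, ∀ x, c * ‖x‖ ≤ nrm x := by
  have hne : (sphere (0 : Fin n → ℝ) 1).Nonempty := by
    have : Nonempty (Fin n) := ⟨⟨0, hn⟩⟩
    exact NormedSpace.sphere_nonempty.2 zero_le_one
  obtain ⟨x₀, hx₀, hmin⟩ :=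
    (isCompact_sphere (0 : Fin n → ℝ) 1).exists_isMinOn hne (IsNorm.continuous h).continuousOn
  have hx₀n : ‖x₀‖ = 1 := by simpa using mem_sphere_iff_norm.1 hx₀
  have hx₀0 : x₀ ≠ 0 := by intro e; rw [e] at hx₀n; simp at hx₀n
  refine ⟨nrm x₀, h.pos hx₀0, fun x => ?_⟩
  rcases eq_or_ne x 0 with rfl | hx
  · simp [IsNorm.zero h]
  · have hxn : ‖x‖ ≠ 0 := norm_ne_zero_iff.2 hx
    have hxpos : (0:ℝ) < ‖x‖ := lt_of_le_of_ne (norm_nonneg x) (Ne.symm hxn)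
    have hmem : ‖x‖⁻¹ • x ∈ sphere (0 : Fin n → ℝ) 1 := by
      simp [norm_smul, abs_of_nonneg (inv_nonneg.2 (norm_nonneg x)), inv_mul_cancel₀ hxn]
    have h2 : nrm x₀ ≤ nrm (‖x‖⁻¹ • x) := hmin hmem
    have he : nrm (‖x‖⁻¹ • x) = ‖x‖⁻¹ * nrm x := by
      rw [h.2.2.1]
      congr 1
      exact abs_of_nonneg (inv_nonneg.2 (norm_nonneg x))
    rw [he] at h2
    calc nrm x₀ * ‖x‖ ≤ (‖x‖⁻¹ * nrm x) * ‖x‖ :=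
          mul_le_mul_of_nonneg_right h2 (norm_nonneg x)
      _ = nrm x := by field_simp

theorem exists_auerbach (hn : 0 < n) (h : IsNorm nrm) :
    ∃ A : Matrix (Fin n) (Fin n) ℝ, A.det ≠ 0 ∧
      (∀ v : Fin n → ℝ, A.mulVec ((A.det)⁻¹ • A.cramer v) = v) ∧
      (∀ x, ‖x‖ ≤ nrm (A.mulVec x)) ∧ (∀ x, nrm (A.mulVec x) ≤ n * ‖x‖) := by
  classical
  obtain ⟨c, hc, hcle⟩ := IsNorm.lower hn h
  -- the unit sphere of nrm is compact
  have hsph : IsCompact (nrm ⁻¹' {1}) := by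
    apply Metric.isCompact_of_isClosed_isBounded
    · exact IsClosed.preimage (IsNorm.continuous h) isClosed_singleton
    · apply (Metric.isBounded_closedBall (x := (0 : Fin n → ℝ)) (r := c⁻¹)).subset
      intro x hx
      simp only [Set.mem_preimage, Set.mem_singleton_iff] at hx
      rw [Metric.mem_closedBall, dist_zero_right]
      have := hcle x
      rw [hx] at this
      rw [mul_comm] at this
      rw [← le_div_iff₀ hc] at this
      simpa [one_div] using this
  set S : Set (Fin n → Fin n → ℝ) := Set.univ.pi (fun _ => nrm ⁻¹' {1}) with hS
  have hScomp : IsCompact S := isCompact_univ_pi fun _ => hsph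
  set g : (Fin n → Fin n → ℝ) → ℝ := fun v => |(Matrix.of fun i j => v j i).det| with hg
  have hgcont : Continuous g := by
    apply continuous_abs.comp
    apply Continuous.matrix_det
    apply continuous_matrix
    intro i j
    exact (continuous_apply i).comp (continuous_apply j)
  -- a point of S with positive g
  set δ : Fin n → (Fin n → ℝ) := fun i => fun j => if i = j then (1:ℝ) else 0 with hδ
  have hδne : ∀ i, δ i ≠ 0 := by
    intro i he
    have := congrFun he i
    simp [hδ] at this
  set e : Fin n → (Fin n → ℝ) := fun i => (nrm (δ i))⁻¹ • δ i with he
  have heS : e ∈ S := by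
    intro i _
    simp only [Set.mem_preimage, Set.mem_singleton_iff, he]
    rw [h.2.2.1]
    rw [abs_of_nonneg (inv_nonneg.2 (h.1 _))]
    exact inv_mul_cancel₀ (ne_of_gt (IsNorm.pos h (hδne i)))
  have hge : 0 < g e := by
    have : (Matrix.of fun i j => e j i) = Matrix.diagonal (fun i => (nrm (δ i))⁻¹) := by
      ext i j
      simp only [Matrix.of_apply, he, hδ, Matrix.diagonal_apply, Pi.smul_apply, smul_eq_mul]
      by_cases hij : i = j
      · subst hij; simp
      · simp [hij, Ne.symm hij]
    rw [hg]
    simp only [this, Matrix.det_diagonal]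
    rw [abs_pos]
    exact Finset.prod_ne_zero_iff.2 fun i _ => inv_ne_zero (ne_of_gt (IsNorm.pos h (hδne i)))
  obtain ⟨b, hbS, hmax⟩ := hScomp.exists_isMaxOn ⟨e, heS⟩ hgcont.continuousOn
  set A : Matrix (Fin n) (Fin n) ℝ := Matrix.of fun i j => b j i with hA
  have hDpos : 0 < |A.det| := lt_of_lt_of_le hge (hmax heS : g e ≤ g b)
  have hdet : A.det ≠ 0 := fun h0 => by simp [h0] at hDpos
  have hbnrm : ∀ j, nrm (b j) = 1 := fun j => hbS j (Set.mem_univ j)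
  -- key estimate
  have key : ∀ (y : Fin n → ℝ) (j), |A.cramer y j| ≤ nrm y * |A.det| := by
    intro y j
    rcases eq_or_ne y 0 with rfl | hy
    · simp [IsNorm.zero h]
    · have ht : 0 < nrm y := IsNorm.pos h hy
      set u : Fin n → ℝ := (nrm y)⁻¹ • y with hu
      have hun : nrm u = 1 := by
        rw [hu, h.2.2.1, abs_of_nonneg (inv_nonneg.2 (h.1 _))]
        exact inv_mul_cancel₀ (ne_of_gt ht)
      have hupd : Function.update b j u ∈ S := by
        intro i _
        simp only [Set.mem_preimage, Set.mem_singleton_iff]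
        rcases eq_or_ne i j with rfl | hij
        · rw [Function.update_self]; exact hun
        · rw [Function.update_of_ne hij]; exact hbnrm i
      have hle : |(A.updateCol j u).det| ≤ |A.det| := by
        have h1 : g (Function.update b j u) ≤ g b := hmax hupd
        have h2 : (Matrix.of fun i j' => (Function.update b j u) j' i) = A.updateCol j u := by
          ext i j'
          simp only [Matrix.of_apply, Matrix.updateCol_apply, Function.update_apply, hA]
          by_cases hjj : j' = j <;> simp [hjj]
        rw [hg] at h1
        simp only [h2] at h1
        exact h1
      have hyu : y = (nrm y) • u := by rw [hu, smul_inv_smul₀ (ne_of_gt ht)]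
      rw [Matrix.cramer_apply]
      calc |(A.updateCol j y).det| = |(A.updateCol j ((nrm y) • u)).det| := by rw [← hyu]
        _ = |nrm y| * |(A.updateCol j u).det| := by rw [Matrix.det_updateCol_smul, abs_mul]
        _ ≤ nrm y * |A.det| := by
            rw [abs_of_pos ht]
            exact mul_le_mul_of_nonneg_left hle (le_of_lt ht)
  -- injectivity & cramer identity
  have hinj : Function.Injective A.mulVec := by
    intro u v huv
    have := congrArg (A⁻¹.mulVec) huv
    rwa [Matrix.mulVec_mulVec, Matrix.mulVec_mulVec,
      Matrix.nonsing_inv_mul A (isUnit_iff_ne_zero.2 hdet),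
      Matrix.one_mulVec, Matrix.one_mulVec] at this
  have hcm : ∀ x, A.cramer (A.mulVec x) = A.det • x := by
    intro x
    apply hinj
    rw [Matrix.mulVec_cramer, Matrix.mulVec_smul]
  refine ⟨A, hdet, ?_, ?_, ?_⟩
  · intro v
    rw [Matrix.mulVec_smul, Matrix.mulVec_cramer, inv_smul_smul₀ hdet]
  · intro x
    rw [pi_norm_le_iff_of_nonneg (h.1 _)]
    intro j
    have h1 := key (A.mulVec x) j
    rw [hcm x] at h1
    simp only [Pi.smul_apply, smul_eq_mul, abs_mul] at h1
    rw [Real.norm_eq_abs]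
    rw [mul_comm] at h1
    exact le_of_mul_le_mul_right h1 hDpos
  · intro x
    have hmv : A.mulVec x = ∑ j, x j • b j := by
      funext i
      rw [Matrix.mulVec, dotProduct, Finset.sum_apply]
      congr 1
      funext j
      simp [hA, mul_comm]
    rw [hmv]
    calc nrm (∑ j, x j • b j) ≤ ∑ j, nrm (x j • b j) := IsNorm.sum_le h _ _
      _ = ∑ j, |x j| := by simp [h.2.2.1, hbnrm]
      _ ≤ ∑ _j : Fin n, ‖x‖ := Finset.sum_le_sum fun j _ => by
            simpa using norm_le_pi_norm x j
      _ = n * ‖x‖ := by simp [mul_comm]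

theorem exists_ulim {α : Type*} [TopologicalSpace α] (U : Ultrafilter ℕ) {s : Set α}
    (hs : IsCompact s) {u : ℕ → α} (hu : ∀ k, u k ∈ s) : ∃ L, Tendsto u ↑U (𝓝 L) := by
  obtain ⟨a, -, ha⟩ := hs.ultrafilter_le_nhds (U.map u) (by
    rw [Ultrafilter.coe_map, le_principal_iff, Filter.mem_map]
    exact Filter.univ_mem' hu)
  rw [Ultrafilter.coe_map] at ha
  exact ⟨a, ha⟩

theorem exists_ulim_real (U : Ultrafilter ℕ) {u : ℕ → ℝ} {C : ℝ} (h : ∀ k, |u k| ≤ C) :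
    ∃ L, Tendsto u ↑U (𝓝 L) :=
  exists_ulim U isCompact_Icc (s := Set.Icc (-C) C)
    (fun k => by rcases abs_le.1 (h k) with ⟨h1, h2⟩; exact ⟨h1, h2⟩)

theorem isNorm_pi : IsNorm (fun x : Fin n → ℝ => ‖x‖) :=
  ⟨fun x => norm_nonneg x, fun x hx => norm_eq_zero.1 hx,
   fun c x => by simp [norm_smul],
   fun x y => norm_add_le x y⟩

theorem norm_le_add_sub' {E : Type*} [SeminormedAddCommGroup E] (a b : E) :
    ‖b‖ ≤ ‖a‖ + ‖a - b‖ := by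
  calc ‖b‖ = ‖a - (a - b)‖ := by rw [sub_sub_cancel]
    _ ≤ ‖a‖ + ‖a - b‖ := norm_sub_le _ _

theorem norm_le_sub_add'' {E : Type*} [SeminormedAddCommGroup E] (a b : E) :
    ‖a‖ ≤ ‖a - b‖ + ‖b‖ := by
  calc ‖a‖ = ‖(a - b) + b‖ := by rw [sub_add_cancel]
    _ ≤ ‖a - b‖ + ‖b‖ := norm_add_le _ _

theorem attained_general {X : Type*} [NormedAddCommGroup X] [NormedSpace ℝ X]
    (P : StrongDual ℝ (StrongDual ℝ X) →L[ℝ] X) (hPnorm : @Norm.norm _ (@ContinuousLinearMap.hasOpNorm ℝ ℝ (StrongDual ℝ (StrongDual ℝ X)) X _ _ _ _ _ _ _) P = 1)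
    (hP : ∀ f : X, P (inclusionInDoubleDual ℝ X f) = f)
    {n : ℕ} (hn : 0 < n) {γ : ℝ} (hγ : 1 ≤ γ) {K : Set X} (hK : IsCompact K)
    (s : Set X) (hKs : K ⊆ s) :
    ∃ (nrm : (Fin n → ℝ) → ℝ) (a : X → Fin n → ℝ) (M : (Fin n → ℝ) → X),
      IsNorm nrm ∧
      (∀ f ∈ s, ∀ g ∈ s, nrm (a f - a g) ≤ γ * ‖f - g‖) ∧
      (∀ x y, ‖M x - M y‖ ≤ γ * nrm (x - y)) ∧
      (⨆ f : K, ‖(f : X) - M (a (f : X))‖) =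
        sInf { d | ∃ (nrm : (Fin n → ℝ) → ℝ) (a : X → Fin n → ℝ) (M : (Fin n → ℝ) → X),
          IsNorm nrm ∧
          (∀ f ∈ s, ∀ g ∈ s, nrm (a f - a g) ≤ γ * ‖f - g‖) ∧
          (∀ x y, ‖M x - M y‖ ≤ γ * nrm (x - y)) ∧
          d = ⨆ f : K, ‖(f : X) - M (a (f : X))‖ } := by
  classical
  have hγ0 : (0:ℝ) ≤ γ := le_trans zero_le_one hγ
  set SS := { d | ∃ (nrm : (Fin n → ℝ) → ℝ) (a : X → Fin n → ℝ) (M : (Fin n → ℝ) → X),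
          IsNorm nrm ∧
          (∀ f ∈ s, ∀ g ∈ s, nrm (a f - a g) ≤ γ * ‖f - g‖) ∧
          (∀ x y, ‖M x - M y‖ ≤ γ * nrm (x - y)) ∧
          d = ⨆ f : K, ‖(f : X) - M (a (f : X))‖ } with hSS
  have htrivmem : (⨆ f : K, ‖(f : X) - (fun _ : Fin n → ℝ => (0:X)) ((fun _ : X => (0 : Fin n → ℝ)) (f : X))‖) ∈ SS := by
    refine ⟨fun x => ‖x‖, fun _ => 0, fun _ => 0, isNorm_pi, ?_, ?_, rfl⟩
    · intro f _ g _
      simpa using mul_nonneg hγ0 (norm_nonneg (f - g))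
    · intro x y
      simpa using mul_nonneg hγ0 (norm_nonneg (x - y))
  have hSSne : SS.Nonempty := ⟨_, htrivmem⟩
  have hSSnonneg : ∀ d ∈ SS, (0:ℝ) ≤ d := by
    rintro d ⟨nrm, a, M, h1, h2, h3, rfl⟩
    exact Real.iSup_nonneg fun f => norm_nonneg _
  have hSSbdd : BddBelow SS := ⟨0, fun d hd => hSSnonneg d hd⟩
  set δ := sInf SS with hδ
  have hδ0 : 0 ≤ δ := le_csInf hSSne hSSnonneg
  rcases K.eq_empty_or_nonempty with hKe | ⟨f₀, hf₀⟩
  · haveI : IsEmpty K := Set.isEmpty_coe_sort.2 hKe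
    have hze : ∀ d ∈ SS, d = 0 := by
      rintro d ⟨nrm, a, M, h1, h2, h3, rfl⟩
      exact Real.iSup_of_isEmpty _
    have hδz : δ = 0 := le_antisymm (by
      have := csInf_le hSSbdd htrivmem
      rwa [hze _ htrivmem] at this) hδ0
    refine ⟨fun x => ‖x‖, fun _ => 0, fun _ => 0, isNorm_pi, ?_, ?_, ?_⟩
    · intro f _ g _
      simpa using mul_nonneg hγ0 (norm_nonneg (f - g))
    · intro x y
      simpa using mul_nonneg hγ0 (norm_nonneg (x - y))
    · rw [Real.iSup_of_isEmpty, hδz]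
  -- ============ main case: K nonempty ============
  have hf₀s : f₀ ∈ s := hKs hf₀
  haveI : Nonempty K := ⟨⟨f₀, hf₀⟩⟩
  obtain ⟨R, hR⟩ := hK.isBounded.exists_norm_le
  -- minimizing sequence
  have hseq : ∀ k : ℕ, ∃ (nrm : (Fin n → ℝ) → ℝ) (a : X → Fin n → ℝ) (M : (Fin n → ℝ) → X),
      IsNorm nrm ∧ (∀ f ∈ s, ∀ g ∈ s, nrm (a f - a g) ≤ γ * ‖f - g‖) ∧
      (∀ x y, ‖M x - M y‖ ≤ γ * nrm (x - y)) ∧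
      (⨆ f : K, ‖(f : X) - M (a (f : X))‖) < δ + 1/(k+1) := by
    intro k
    have h1 : δ < δ + 1/(k+1) := lt_add_of_pos_right δ (by positivity)
    obtain ⟨d, hd, hdlt⟩ := (csInf_lt_iff hSSbdd hSSne).1 h1
    obtain ⟨nrm, a, M, h2, h3, h4, rfl⟩ := hd
    exact ⟨nrm, a, M, h2, h3, h4, hdlt⟩
  choose nrm0 a0 M0 hN0 ha0 hM0 hd0 using hseq
  set D : ℕ → ℝ := fun k => ⨆ f : K, ‖(f : X) - M0 k (a0 k (f : X))‖ with hD
  have hDmem : ∀ k, D k ∈ SS := fun k => ⟨nrm0 k, a0 k, M0 k, hN0 k, ha0 k, hM0 k, rfl⟩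
  have hδD : ∀ k, δ ≤ D k := fun k => csInf_le hSSbdd (hDmem k)
  have hbddA : ∀ k, BddAbove (Set.range fun f : K => ‖(f : X) - M0 k (a0 k (f : X))‖) := by
    intro k
    refine ⟨R + (γ * (γ * (R + R)) + ‖M0 k (a0 k f₀)‖), ?_⟩
    rintro _ ⟨f, rfl⟩
    have h1 : ‖M0 k (a0 k (f:X)) - M0 k (a0 k f₀)‖ ≤ γ * (γ * ‖(f:X) - f₀‖) := by
      refine le_trans (hM0 k _ _) ?_
      exact mul_le_mul_of_nonneg_left (ha0 k (f:X) (hKs f.2) f₀ hf₀s) hγ0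
    have h2 : ‖(f:X) - f₀‖ ≤ R + R := by
      refine le_trans (norm_sub_le _ _) ?_
      exact add_le_add (hR _ f.2) (hR _ hf₀)
    calc ‖(f:X) - M0 k (a0 k (f:X))‖ ≤ ‖(f:X)‖ + ‖M0 k (a0 k (f:X))‖ := norm_sub_le _ _
      _ ≤ R + (‖M0 k (a0 k (f:X)) - M0 k (a0 k f₀)‖ + ‖M0 k (a0 k f₀)‖) := by
          refine add_le_add (hR _ f.2) ?_
          exact norm_le_sub_add'' _ _
      _ ≤ R + (γ * (γ * (R + R)) + ‖M0 k (a0 k f₀)‖) := by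
          refine add_le_add_right (add_le_add_left (le_trans h1 ?_) _) _
          exact mul_le_mul_of_nonneg_left (mul_le_mul_of_nonneg_left h2 hγ0) hγ0
  have hptK : ∀ k, ∀ f : K, ‖(f : X) - M0 k (a0 k (f : X))‖ ≤ D k :=
    fun k f => le_ciSup (hbddA k) f
  -- Auerbach normalization
  choose A hAdet hAinv hAlow hAup using fun k => exists_auerbach hn (hN0 k)
  set N : ℕ → (Fin n → ℝ) → ℝ := fun k x => nrm0 k ((A k).mulVec x) with hNdef
  set abar : ℕ → X → (Fin n → ℝ) :=
    fun k f => ((A k).det)⁻¹ • (A k).cramer (a0 k f - a0 k f₀) with habar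
  set Mbar : ℕ → (Fin n → ℝ) → X :=
    fun k x => M0 k ((A k).mulVec x + a0 k f₀) with hMbar
  have hmulabar : ∀ k f, (A k).mulVec (abar k f) = a0 k f - a0 k f₀ := fun k f => hAinv k _
  have hNnorm : ∀ k, IsNorm (N k) := by
    intro k
    refine ⟨fun x => (hN0 k).1 _, fun x hx => ?_, fun c x => ?_, fun x y => ?_⟩
    · have h2 : ‖x‖ ≤ (0:ℝ) := by rw [← hx]; exact hAlow k x
      exact norm_le_zero_iff.1 h2
    · show nrm0 k ((A k).mulVec (c • x)) = |c| * nrm0 k ((A k).mulVec x)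
      rw [Matrix.mulVec_smul, (hN0 k).2.2.1]
    · show nrm0 k ((A k).mulVec (x + y)) ≤ _
      rw [Matrix.mulVec_add]
      exact (hN0 k).2.2.2 _ _
  have habarlip : ∀ k, ∀ f ∈ s, ∀ g ∈ s, N k (abar k f - abar k g) ≤ γ * ‖f - g‖ := by
    intro k f hf g hg
    show nrm0 k ((A k).mulVec (abar k f - abar k g)) ≤ γ * ‖f - g‖
    rw [Matrix.mulVec_sub, hmulabar, hmulabar, sub_sub_sub_cancel_right]
    exact ha0 k f hf g hg
  have habarbd : ∀ k, ∀ f ∈ s, ‖abar k f‖ ≤ γ * ‖f - f₀‖ := by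
    intro k f hf
    refine le_trans (hAlow k _) ?_
    rw [hmulabar]
    exact ha0 k f hf f₀ hf₀s
  have hMbarlip : ∀ k x y, ‖Mbar k x - Mbar k y‖ ≤ γ * N k (x - y) := by
    intro k x y
    show ‖M0 k _ - M0 k _‖ ≤ γ * nrm0 k ((A k).mulVec (x - y))
    refine le_trans (hM0 k _ _) ?_
    rw [add_sub_add_right_eq_sub, Matrix.mulVec_sub]
  have hcomp : ∀ k f, Mbar k (abar k f) = M0 k (a0 k f) := by
    intro k f
    show M0 k _ = _
    rw [hmulabar, sub_add_cancel]
  have hone : ∀ k : ℕ, 1/((k:ℝ)+1) ≤ 1 := by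
    intro k
    rw [div_le_one (by positivity)]
    linarith [Nat.cast_nonneg (α := ℝ) k]
  have hMbar0 : ∀ k, ‖Mbar k 0‖ ≤ ‖f₀‖ + (δ + 1) := by
    intro k
    have h1 : Mbar k 0 = M0 k (a0 k f₀) := by
      show M0 k _ = _
      rw [Matrix.mulVec_zero, zero_add]
    rw [h1]
    have h2 : ‖f₀ - M0 k (a0 k f₀)‖ ≤ δ + 1 := by
      refine le_trans (hptK k ⟨f₀, hf₀⟩) (le_trans (le_of_lt (hd0 k)) ?_)
      linarith [hone k]
    calc ‖M0 k (a0 k f₀)‖ ≤ ‖f₀‖ + ‖f₀ - M0 k (a0 k f₀)‖ := norm_le_add_sub' _ _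
      _ ≤ ‖f₀‖ + (δ + 1) := add_le_add_right h2 _
  have hMbarbd : ∀ k x, ‖Mbar k x‖ ≤ γ * ((n:ℝ) * ‖x‖) + (‖f₀‖ + (δ + 1)) := by
    intro k x
    have h1 : ‖Mbar k x - Mbar k 0‖ ≤ γ * N k x := by
      have := hMbarlip k x 0
      rwa [sub_zero] at this
    have h2 : N k x ≤ (n:ℝ) * ‖x‖ := hAup k x
    calc ‖Mbar k x‖ ≤ ‖Mbar k x - Mbar k 0‖ + ‖Mbar k 0‖ := norm_le_sub_add'' _ _
      _ ≤ γ * ((n:ℝ) * ‖x‖) + (‖f₀‖ + (δ + 1)) := by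
          refine add_le_add (le_trans h1 ?_) (hMbar0 k)
          exact mul_le_mul_of_nonneg_left h2 hγ0
  -- ultrafilter
  obtain ⟨U, hU⟩ := Ultrafilter.exists_le (atTop : Filter ℕ)
  have hDlim : Tendsto D atTop (𝓝 δ) := by
    have h1 : Tendsto (fun k : ℕ => δ + 1/((k:ℝ)+1)) atTop (𝓝 δ) := by
      have := tendsto_const_nhds (x := δ) (f := atTop (α := ℕ))
      simpa using this.add tendsto_one_div_add_atTop_nhds_zero_nat
    exact tendsto_of_tendsto_of_tendsto_of_le_of_le tendsto_const_nhds h1 hδD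
      (fun k => le_of_lt (hd0 k))
  have hDlimU : Tendsto D ↑U (𝓝 δ) := hDlim.mono_left hU
  -- limit norm
  have hNex : ∀ x, ∃ L, Tendsto (fun k => N k x) ↑U (𝓝 L) := by
    intro x
    refine exists_ulim_real U (C := (n:ℝ) * ‖x‖) fun k => abs_le.2 ⟨?_, hAup k x⟩
    have h1 : (0:ℝ) ≤ N k x := (hNnorm k).1 x
    have h2 : (0:ℝ) ≤ (n:ℝ) * ‖x‖ := by positivity
    linarith
  choose Nl hNl using hNex
  -- limit of a
  have haex : ∀ f : X, ∃ L, f ∈ s → Tendsto (fun k => abar k f) ↑U (𝓝 L) := by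
    intro f
    by_cases hf : f ∈ s
    · obtain ⟨L, hL⟩ := exists_ulim U (isCompact_closedBall (0 : Fin n → ℝ) (γ * ‖f - f₀‖))
        (fun k => mem_closedBall_zero_iff.2 (habarbd k f hf))
      exact ⟨L, fun _ => hL⟩
    · exact ⟨0, fun h => absurd h hf⟩
  choose al hal using haex
  -- weak-* limit of Mbar
  have hmex : ∀ x, ∃ m : WeakDual ℝ (StrongDual ℝ X),
      Tendsto (fun k => (StrongDual.toWeakDual (inclusionInDoubleDual ℝ X (Mbar k x)))) ↑U (𝓝 m) := by
    intro x
    refine exists_ulim U (WeakDual.isCompact_closedBall 0 (γ * ((n:ℝ) * ‖x‖) + (‖f₀‖ + (δ + 1)))) ?_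
    intro k
    rw [Set.mem_preimage, mem_closedBall_zero_iff]
    show ‖inclusionInDoubleDual ℝ X (Mbar k x)‖ ≤ _
    exact le_trans (double_dual_bound ℝ X _) (hMbarbd k x)
  choose m hm using hmex
  set Ml : (Fin n → ℝ) → X := fun x => P (WeakDual.toStrongDual (m x)) with hMl
  -- evaluation limits
  have heval : ∀ x (φ : StrongDual ℝ X),
      Tendsto (fun k => φ (Mbar k x)) ↑U (𝓝 (WeakDual.toStrongDual (m x) φ)) := by
    intro x φ
    have h1 := ((WeakDual.eval_continuous (𝕜 := ℝ) (E := StrongDual ℝ X) φ).tendsto (m x)).comp (hm x)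
    have h2 : (fun k => (StrongDual.toWeakDual (inclusionInDoubleDual ℝ X (Mbar k x))) φ)
        = fun k => φ (Mbar k x) := by
      funext k
      exact NormedSpace.dual_def ℝ X (Mbar k x) φ
    rw [show ((fun w : WeakDual ℝ (StrongDual ℝ X) => w φ) ∘ fun k =>
        StrongDual.toWeakDual (inclusionInDoubleDual ℝ X (Mbar k x)))
        = fun k => (StrongDual.toWeakDual (inclusionInDoubleDual ℝ X (Mbar k x))) φ from rfl] at h1
    rw [h2] at h1
    exact h1
  -- moving-point limits for N
  have hNmov : ∀ (v : ℕ → Fin n → ℝ) (w : Fin n → ℝ), Tendsto v ↑U (𝓝 w) →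
      Tendsto (fun k => N k (v k)) ↑U (𝓝 (Nl w)) := by
    intro v w hv
    have h1 : Tendsto (fun k => N k (v k) - N k w) ↑U (𝓝 0) := by
      refine squeeze_zero_norm (a := fun k => (n:ℝ) * ‖v k - w‖) ?_ ?_
      · intro k
        rw [Real.norm_eq_abs]
        exact le_trans (IsNorm.abs_sub' (hNnorm k) _ _) (hAup k _)
      · have h2 := tendsto_iff_norm_sub_tendsto_zero.1 hv
        have h3 := h2.const_mul (n:ℝ)
        simpa using h3
    have h4 := h1.add (hNl w)
    simpa using h4
  -- Nl is a norm
  have hNlnorm : IsNorm Nl := by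
    refine ⟨fun x => ?_, fun x hx => ?_, fun c x => ?_, fun x y => ?_⟩
    · exact ge_of_tendsto (hNl x) (Filter.Eventually.of_forall fun k => (hNnorm k).1 x)
    · have h1 : ‖x‖ ≤ Nl x :=
        ge_of_tendsto (hNl x) (Filter.Eventually.of_forall fun k => hAlow k x)
      rw [hx] at h1
      exact norm_le_zero_iff.1 h1
    · refine tendsto_nhds_unique (hNl (c • x)) ?_
      have h1 : (fun k => N k (c • x)) = fun k => |c| * N k x := by
        funext k
        exact (hNnorm k).2.2.1 c x
      rw [h1]
      exact (hNl x).const_mul |c|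
    · exact le_of_tendsto_of_tendsto' (hNl (x + y)) ((hNl x).add (hNl y))
        (fun k => (hNnorm k).2.2.2 x y)
  -- a is Lipschitz
  have hallip : ∀ f ∈ s, ∀ g ∈ s, Nl (al f - al g) ≤ γ * ‖f - g‖ := by
    intro f hf g hg
    have h1 : Tendsto (fun k => abar k f - abar k g) ↑U (𝓝 (al f - al g)) :=
      (hal f hf).sub (hal g hg)
    exact le_of_tendsto (hNmov _ _ h1)
      (Filter.Eventually.of_forall fun k => habarlip k f hf g hg)
  -- M is Lipschitz
  have hMllip : ∀ x y, ‖Ml x - Ml y‖ ≤ γ * Nl (x - y) := by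
    intro x y
    have hkey : ‖WeakDual.toStrongDual (m x) - WeakDual.toStrongDual (m y)‖ ≤ γ * Nl (x - y) := by
      refine ContinuousLinearMap.opNorm_le_bound _
        (mul_nonneg hγ0 (hNlnorm.1 _)) fun φ => ?_
      have h1 : Tendsto (fun k => φ (Mbar k x) - φ (Mbar k y)) ↑U
          (𝓝 (WeakDual.toStrongDual (m x) φ - WeakDual.toStrongDual (m y) φ)) :=
        (heval x φ).sub (heval y φ)
      have h2 := h1.norm
      have h3 : Tendsto (fun k => γ * N k (x - y) * ‖φ‖) ↑U (𝓝 (γ * Nl (x - y) * ‖φ‖)) :=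
        (((hNl (x - y)).const_mul γ)).mul_const ‖φ‖
      rw [ContinuousLinearMap.sub_apply]
      refine le_of_tendsto_of_tendsto' h2 h3 fun k => ?_
      calc ‖φ (Mbar k x) - φ (Mbar k y)‖ = ‖φ (Mbar k x - Mbar k y)‖ := by rw [map_sub]
        _ ≤ ‖φ‖ * ‖Mbar k x - Mbar k y‖ := φ.le_opNorm _
        _ ≤ ‖φ‖ * (γ * N k (x - y)) :=
            mul_le_mul_of_nonneg_left (hMbarlip k x y) (norm_nonneg φ)
        _ = γ * N k (x - y) * ‖φ‖ := by ring
    calc ‖Ml x - Ml y‖ = ‖P (WeakDual.toStrongDual (m x) - WeakDual.toStrongDual (m y))‖ := by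
          exact congrArg norm (P.map_sub (WeakDual.toStrongDual (m x)) (WeakDual.toStrongDual (m y))).symm
      _ ≤ @Norm.norm _ (@ContinuousLinearMap.hasOpNorm ℝ ℝ (StrongDual ℝ (StrongDual ℝ X)) X _ _ _ _ _ _ _) P * ‖WeakDual.toStrongDual (m x) - WeakDual.toStrongDual (m y)‖ :=
          @ContinuousLinearMap.le_opNorm ℝ ℝ (StrongDual ℝ (StrongDual ℝ X)) X _ _ _ _ _ _ _ _ P _
      _ ≤ γ * Nl (x - y) := by rw [hPnorm, one_mul]; exact hkey
  -- pointwise bound on K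
  have hptlim : ∀ f : K, ‖(f : X) - Ml (al (f : X))‖ ≤ δ := by
    intro f
    have hfs : (f : X) ∈ s := hKs f.2
    set w : StrongDual ℝ (StrongDual ℝ X) :=
      inclusionInDoubleDual ℝ X (f : X) - WeakDual.toStrongDual (m (al (f : X))) with hw
    have hfw : (f : X) - Ml (al (f : X)) = P w := by
      rw [hw]
      have e := P.map_sub (inclusionInDoubleDual ℝ X (f : X)) (WeakDual.toStrongDual (m (al (f : X))))
      rw [hP] at e
      exact e.symm
    have hwbd : ‖w‖ ≤ δ := by
      refine ContinuousLinearMap.opNorm_le_bound _ hδ0 fun φ => ?_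
      have h1 : Tendsto (fun k => φ (f : X) - φ (Mbar k (al (f : X)))) ↑U
          (𝓝 (w φ)) := by
        rw [hw, ContinuousLinearMap.sub_apply, NormedSpace.dual_def]
        exact tendsto_const_nhds.sub (heval (al (f : X)) φ)
      have h2 := h1.norm
      have h3 : Tendsto (fun k => D k * ‖φ‖ + ‖φ‖ * (γ * ((n:ℝ) * ‖abar k (f : X) - al (f : X)‖)))
          ↑U (𝓝 (δ * ‖φ‖)) := by
        have h4 : Tendsto (fun k => ‖abar k (f : X) - al (f : X)‖) ↑U (𝓝 0) :=
          tendsto_iff_norm_sub_tendsto_zero.1 (hal (f : X) hfs)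
        have h5 := ((h4.const_mul (n:ℝ)).const_mul γ).const_mul ‖φ‖
        have h6 := (hDlimU.mul_const ‖φ‖).add h5
        simpa using h6
      refine le_of_tendsto_of_tendsto' h2 h3 fun k => ?_
      have e1 : φ (f : X) - φ (Mbar k (al (f : X)))
          = φ ((f : X) - Mbar k (abar k (f : X))) + φ (Mbar k (abar k (f : X)) - Mbar k (al (f : X))) := by
        rw [← map_add, ← map_sub]
        congr 1
        abel
      rw [e1]
      have e2 : ‖φ ((f : X) - Mbar k (abar k (f : X)))‖ ≤ ‖φ‖ * D k := by
        refine le_trans (φ.le_opNorm _) (mul_le_mul_of_nonneg_left ?_ (norm_nonneg φ))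
        rw [hcomp]
        exact hptK k f
      have e3 : ‖φ (Mbar k (abar k (f : X)) - Mbar k (al (f : X)))‖
          ≤ ‖φ‖ * (γ * ((n:ℝ) * ‖abar k (f : X) - al (f : X)‖)) := by
        refine le_trans (φ.le_opNorm _) (mul_le_mul_of_nonneg_left ?_ (norm_nonneg φ))
        refine le_trans (hMbarlip k _ _) (mul_le_mul_of_nonneg_left (hAup k _) hγ0)
      calc ‖_ + _‖ ≤ ‖φ ((f : X) - Mbar k (abar k (f : X)))‖
            + ‖φ (Mbar k (abar k (f : X)) - Mbar k (al (f : X)))‖ := norm_add_le _ _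
        _ ≤ ‖φ‖ * D k + ‖φ‖ * (γ * ((n:ℝ) * ‖abar k (f : X) - al (f : X)‖)) := add_le_add e2 e3
        _ = D k * ‖φ‖ + ‖φ‖ * (γ * ((n:ℝ) * ‖abar k (f : X) - al (f : X)‖)) := by ring
    calc ‖(f : X) - Ml (al (f : X))‖ = ‖P w‖ := by rw [hfw]
      _ ≤ @Norm.norm _ (@ContinuousLinearMap.hasOpNorm ℝ ℝ (StrongDual ℝ (StrongDual ℝ X)) X _ _ _ _ _ _ _) P * ‖w‖ :=
          @ContinuousLinearMap.le_opNorm ℝ ℝ (StrongDual ℝ (StrongDual ℝ X)) X _ _ _ _ _ _ _ _ P _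
      _ ≤ δ := by rw [hPnorm, one_mul]; exact hwbd
  -- conclusion
  refine ⟨Nl, al, Ml, hNlnorm, hallip, hMllip, le_antisymm ?_ ?_⟩
  · exact ciSup_le hptlim
  · exact csInf_le hSSbdd ⟨Nl, al, Ml, hNlnorm, hallip, hMllip, rfl⟩

end Stmt4Aux

/-- If a separable Banach space X is complemented in its bidual by a norm-one
linear projection, then the infima defining both δ*_{n,γ}(K)_X and δ̄_{n,γ}(K)_X are attained. -/
theorem stmt4 {X : Type*} [NormedAddCommGroup X] [NormedSpace ℝ X] [CompleteSpace X]
    [TopologicalSpace.SeparableSpace X]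
    (P : StrongDual ℝ (StrongDual ℝ X) →L[ℝ] X)
    (hPnorm : @Norm.norm _ (@ContinuousLinearMap.hasOpNorm ℝ ℝ (StrongDual ℝ (StrongDual ℝ X)) X _ _ _ _ _ _ _) P = 1)
    (hP : ∀ f : X, P (NormedSpace.inclusionInDoubleDual ℝ X f) = f)
    (n : ℕ) (hn : 1 ≤ n) (γ : ℝ) (hγ : 1 ≤ γ) (K : Set X) (hK : IsCompact K) :
    (∃ (nrm : (Fin n → ℝ) → ℝ) (a : X → Fin n → ℝ) (M : (Fin n → ℝ) → X),
      IsNorm nrm ∧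
      (∀ f ∈ K, ∀ g ∈ K, nrm (a f - a g) ≤ γ * ‖f - g‖) ∧
      (∀ x y, ‖M x - M y‖ ≤ γ * nrm (x - y)) ∧
      (⨆ f : K, ‖(f : X) - M (a (f : X))‖) = stableWidth X K n γ) ∧
    (∃ (nrm : (Fin n → ℝ) → ℝ) (a : X → Fin n → ℝ) (M : (Fin n → ℝ) → X),
      IsNorm nrm ∧
      (∀ f g : X, nrm (a f - a g) ≤ γ * ‖f - g‖) ∧
      (∀ x y, ‖M x - M y‖ ≤ γ * nrm (x - y)) ∧
      (⨆ f : K, ‖(f : X) - M (a (f : X))‖) = modStableWidth X K n γ) := by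
  have hn0 : 0 < n := hn
  constructor
  · have h := attained_general P hPnorm hP hn0 hγ hK K (subset_refl K)
    exact h
  · obtain ⟨nrm, a, M, h1, h2, h3, h4⟩ :=
      attained_general P hPnorm hP hn0 hγ hK Set.univ (Set.subset_univ K)
    refine ⟨nrm, a, M, h1, fun f g => h2 f trivial g trivial, h3, ?_⟩
    rw [h4]
    unfold modStableWidth
    congr 1
    ext d
    constructor
    · rintro ⟨nrm, a, M, k1, k2, k3, k4⟩
      exact ⟨nrm, a, M, k1, fun f g => k2 f trivial g trivial, k3, k4⟩
    · rintro ⟨nrm, a, M, k1, k2, k3, k4⟩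
      exact ⟨nrm, a, M, k1, fun f _ g _ => k2 f g, k3, k4⟩
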